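/- Under the (A,B) signGD dynamics, assume additionally that 3·σ₁² < σ₀² (equivalently b < a/3), and suppose that at some time t one has a < |A(t)| < |B(t)| (the partition P₅). Then A(t+1) = A(t) − sgn(A(t))·(a/3), B(t+1) = B(t) − sgn(B(t))·b, sgn(A(t+1)) = sgn(A(t)), sgn(B(t+1)) = sgn(B(t)), and |A(t+1)| < |B(t+1)|; in particular, either |A(t+1)| ≤ a, or the pair (A(t+1), B(t+1)) again satisfies a < |A(t+1)| < |B(t+1)|. -/
import Mathlib


/-- The frequency-domain `(A,B)` signGD error dynamics with `a = σ₀²η`, `b = σ₁²η`: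
`A(t+1) = A(t) − (a/3)(sgn(A+B) + sgn(A) + sgn(A−B))` and
`B(t+1) = B(t) − (b/2)(sgn(A+B) − sgn(A−B))`. -/
def SignGDDyn (σ0sq σ1sq η : ℝ) (A B : ℕ → ℝ) : Prop :=
  (∀ t, A (t+1) = A t - σ0sq * η / 3 *
      (Real.sign (A t + B t) + Real.sign (A t) + Real.sign (A t - B t))) ∧
  (∀ t, B (t+1) = B t - σ1sq * η / 2 *
      (Real.sign (A t + B t) - Real.sign (A t - B t)))

/-- In partition `P₅` (`a < |A(t)| < |B(t)|`) and assuming `3σ₁² < σ₀²`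
(i.e. `b < a/3`): `A` decreases by `a/3` and `B` by `b` towards `0` with
unchanged signs, `|A(t+1)| < |B(t+1)|` still holds; in particular either
`|A(t+1)| ≤ a`, or `(A(t+1), B(t+1))` is again in `P₅`. -/
theorem signGD_partition_P5 (σ0sq σ1sq η : ℝ)
    (h0 : 0 < σ0sq) (h1 : 0 < σ1sq) (hη : 0 < η)
    (hratio : 3 * σ1sq < σ0sq)
    (A B : ℕ → ℝ) (hdyn : SignGDDyn σ0sq σ1sq η A B) (t : ℕ)
    (haA : σ0sq * η < |A t|) (hAB : |A t| < |B t|) :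
    A (t+1) = A t - Real.sign (A t) * (σ0sq * η / 3) ∧
    B (t+1) = B t - Real.sign (B t) * (σ1sq * η) ∧
    Real.sign (A (t+1)) = Real.sign (A t) ∧
    Real.sign (B (t+1)) = Real.sign (B t) ∧
    |A (t+1)| < |B (t+1)| ∧
    (|A (t+1)| ≤ σ0sq * η ∨
      (σ0sq * η < |A (t+1)| ∧ |A (t+1)| < |B (t+1)|)) := by
  obtain ⟨hAd, hBd⟩ := hdyn
  have hapos : 0 < σ0sq * η := mul_pos h0 hη
  have hbpos : 0 < σ1sq * η := mul_pos h1 hη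
  have hba : σ1sq * η < σ0sq * η / 3 := by nlinarith
  -- bounds on A from |A| < |B|
  have hAlt' : -|B t| < A t ∧ A t < |B t| := abs_lt.mp hAB
  -- sign of A+B and A-B equal ±sign B
  have hsAB : Real.sign (A t + B t) = Real.sign (B t) ∧
      Real.sign (A t - B t) = - Real.sign (B t) := by
    rcases lt_trichotomy (B t) 0 with hB | hB | hB
    · have habs : |B t| = -(B t) := abs_of_neg hB
      constructor
      · rw [Real.sign_of_neg hB, Real.sign_of_neg (by linarith [hAlt'.1])]
      · rw [Real.sign_of_neg hB, Real.sign_of_pos (by linarith [hAlt'.2])]; ring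
    · exfalso; rw [hB, abs_zero] at hAB; linarith [abs_nonneg (A t)]
    · have habs : |B t| = B t := abs_of_pos hB
      constructor
      · rw [Real.sign_of_pos hB, Real.sign_of_pos (by linarith [hAlt'.1])]
      · rw [Real.sign_of_pos hB, Real.sign_of_neg (by linarith [hAlt'.2])]
  have hA1 : A (t+1) = A t - Real.sign (A t) * (σ0sq * η / 3) := by
    rw [hAd t, hsAB.1, hsAB.2]; ring
  have hB1 : B (t+1) = B t - Real.sign (B t) * (σ1sq * η) := by
    rw [hBd t, hsAB.1, hsAB.2]; ring
  -- sign and abs of A(t+1)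
  have hAcase : Real.sign (A (t+1)) = Real.sign (A t) ∧ |A (t+1)| = |A t| - σ0sq * η / 3 := by
    rcases lt_trichotomy (A t) 0 with hA | hA | hA
    · have habs : |A t| = -(A t) := abs_of_neg hA
      have hpos : A (t+1) < 0 := by rw [hA1, Real.sign_of_neg hA]; linarith
      constructor
      · rw [Real.sign_of_neg hpos, Real.sign_of_neg hA]
      · rw [abs_of_neg hpos, hA1, Real.sign_of_neg hA, habs]; ring
    · exfalso; rw [hA, abs_zero] at haA; linarith
    · have habs : |A t| = A t := abs_of_pos hA
      have hpos : 0 < A (t+1) := by rw [hA1, Real.sign_of_pos hA]; linarith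
      constructor
      · rw [Real.sign_of_pos hpos, Real.sign_of_pos hA]
      · rw [abs_of_pos hpos, hA1, Real.sign_of_pos hA, habs]; ring
  have hBcase : Real.sign (B (t+1)) = Real.sign (B t) ∧ |B (t+1)| = |B t| - σ1sq * η := by
    rcases lt_trichotomy (B t) 0 with hB | hB | hB
    · have habs : |B t| = -(B t) := abs_of_neg hB
      have hpos : B (t+1) < 0 := by rw [hB1, Real.sign_of_neg hB]; linarith
      constructor
      · rw [Real.sign_of_neg hpos, Real.sign_of_neg hB]
      · rw [abs_of_neg hpos, hB1, Real.sign_of_neg hB, habs]; ring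
    · exfalso; rw [hB, abs_zero] at hAB; linarith [abs_nonneg (A t)]
    · have habs : |B t| = B t := abs_of_pos hB
      have hpos : 0 < B (t+1) := by rw [hB1, Real.sign_of_pos hB]; linarith
      constructor
      · rw [Real.sign_of_pos hpos, Real.sign_of_pos hB]
      · rw [abs_of_pos hpos, hB1, Real.sign_of_pos hB, habs]; ring
  have hlt : |A (t+1)| < |B (t+1)| := by
    rw [hAcase.2, hBcase.2]; linarith
  refine ⟨hA1, hB1, hAcase.1, hBcase.1, hlt, ?_⟩
  rcases le_or_gt (|A (t+1)|) (σ0sq * η) with h | h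
  · exact Or.inl h
  · exact Or.inr ⟨h, hlt⟩
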